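/- Let q and r be distinct primes and let D = V ⋊ Z/r be as above (V = additive group of F_{q^{r-1}}, generator acting by multiplication by an element ζ of order r). If g = (v,i) and h = (w,j) commute in D and g ∉ V (i.e. i ≢ 0 mod r), then h is a power of g. -/

import Mathlib

open Multiplicative

/-- Left multiplication by a unit, as a multiplicative automorphism of the additive
group of the field, written multiplicatively. -/
def unitMulAut (F : Type*) [Field F] : Fˣ →* MulAut (Multiplicative F) where
  toFun u := AddEquiv.toMultiplicative (AddAut.mulLeft u)
  map_one' := by ext x; simp <;> rfl
  map_mul' u v := by ext x; simp [mul_assoc] <;> rfl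

/-- The group `D = V ⋊ ℤ/r`, where `V` is the additive group of the field `F` and the
generator of `ℤ/r` acts by multiplication by `ζ = χ (ofAdd 1)`; multiplication is
`(v,i)·(w,j) = (v + ζ^i w, i+j)`. -/
abbrev DD {r : ℕ} (F : Type*) [Field F] (χ : Multiplicative (ZMod r) →* Fˣ) :=
  Multiplicative F ⋊[(unitMulAut F).comp χ] Multiplicative (ZMod r)
theorem commuting_with_non_V_element_is_power {q r : ℕ} (hq : q.Prime) (hr : r.Prime)
    (hqr : q ≠ r) {F : Type*} [Field F] [Fintype F] (hF : Fintype.card F = q ^ (r - 1))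
    (χ : Multiplicative (ZMod r) →* Fˣ) (hχ : orderOf (χ (ofAdd 1)) = r)
    (g h : DD F χ) (hcomm : g * h = h * g) (hg : g.right ≠ 1) :
    ∃ k : ℕ, h = g ^ k := by
  haveI : Fact r.Prime := ⟨hr⟩
  set i : ZMod r := toAdd g.right with hi_def
  set j : ZMod r := toAdd h.right with hj_def
  have hi : i ≠ 0 := by
    intro h0
    apply hg
    have : g.right = ofAdd i := rfl
    rw [this, h0, ofAdd_zero]
  -- χ evaluation
  have hχ_eval : ∀ x : Multiplicative (ZMod r), χ x = χ (ofAdd 1) ^ (toAdd x).val := by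
    intro x
    rw [← map_pow]
    congr 1
    rw [← ofAdd_nsmul]
    congr 1
    rw [nsmul_eq_mul, mul_one, ZMod.natCast_val, ZMod.cast_id]
    exact (ofAdd_toAdd x).symm ▸ rfl
  set z : F := (χ g.right : F) with hz_def
  have hz1 : z ≠ 1 := by
    intro hz
    have hu : (χ g.right : Fˣ) = 1 := Units.val_eq_one.mp hz
    rw [hχ_eval g.right] at hu
    have hdvd : r ∣ (toAdd g.right).val := by
      have := orderOf_dvd_of_pow_eq_one hu
      rwa [hχ] at this
    have hlt : (toAdd g.right).val < r := ZMod.val_lt _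
    have h0 : (toAdd g.right).val = 0 := Nat.eq_zero_of_dvd_of_lt hdvd hlt
    exact hi ((ZMod.val_eq_zero i).mp h0)
  set v : F := toAdd g.left with hv_def
  set w : F := toAdd h.left with hw_def
  -- power formula
  have hpow_right : ∀ n : ℕ, (g ^ n).right = g.right ^ n := fun n => by
    simpa using map_pow (SemidirectProduct.rightHom) g n
  have hpow_left : ∀ n : ℕ, (g ^ n).left =
      ofAdd ((∑ m ∈ Finset.range n, z ^ m) * v) := by
    intro n
    induction n with
    | zero => simp
    | succ n ih =>
      rw [pow_succ]
      have : (g ^ n * g).left = (g ^ n).left * ofAdd ((χ (g ^ n).right : F) * v) := rfl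
      rw [this, ih, hpow_right, map_pow]
      have hcoe : ((χ g.right ^ n : Fˣ) : F) = z ^ n := by
        rw [Units.val_pow_eq_pow_val]
      rw [hcoe, ← ofAdd_add, Finset.sum_range_succ, add_mul]
  -- choose k
  set k : ℕ := (i⁻¹ * j).val with hk_def
  have hki : (k : ZMod r) * i = j := by
    rw [hk_def, ZMod.natCast_val, ZMod.cast_id, mul_comm i⁻¹ j, mul_assoc,
      inv_mul_cancel₀ hi, mul_one]
  refine ⟨k, ?_⟩
  have hright : h.right = g.right ^ k := by
    have : toAdd (g.right ^ k) = (k : ZMod r) * i := by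
      rw [toAdd_pow, ← hi_def, nsmul_eq_mul]
    have h2 : toAdd h.right = toAdd (g.right ^ k) := by rw [this, hki]
    exact toAdd.injective h2
  -- commutation equation
  have hcl : toAdd (g * h).left = toAdd (h * g).left := by rw [hcomm]
  have heq : v + z * w = w + z ^ k * v := by
    have h1 : toAdd (g * h).left = v + z * w := by
      have : (g * h).left = g.left * ofAdd ((χ g.right : F) * w) := rfl
      rw [this]; simp [hz_def]; rfl
    have h2 : toAdd (h * g).left = w + z ^ k * v := by
      have : (h * g).left = h.left * ofAdd ((χ h.right : F) * v) := rfl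
      rw [this]
      have : (χ h.right : F) = z ^ k := by
        rw [hright, map_pow, Units.val_pow_eq_pow_val]
      rw [this]; simp; rfl
    rw [h1, h2] at hcl
    exact hcl
  have hwv : w = (∑ m ∈ Finset.range k, z ^ m) * v := by
    have hgeo : (1 - z) * (∑ m ∈ Finset.range k, z ^ m) = 1 - z ^ k := by
      have := geom_sum_mul z k
      linear_combination -this
    have key : (1 - z) * w = (1 - z) * ((∑ m ∈ Finset.range k, z ^ m) * v) := by
      rw [← mul_assoc, hgeo]
      linear_combination -heq
    exact mul_left_cancel₀ (sub_ne_zero_of_ne (Ne.symm hz1)) key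
  have hleft : h.left = (g ^ k).left := by
    rw [hpow_left k]
    have : h.left = ofAdd w := rfl
    rw [this, hwv]
  exact SemidirectProduct.ext hleft (by rw [hright, hpow_right])
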